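/- Let M be a cancellative commutative monoid and N a submonoid of M. Then the Grothendieck group of the quotient monoid M/N is isomorphic to K(M)/K(N), the quotient of the Grothendieck group of M by the (naturally embedded) Grothendieck group of N. -/

import Mathlib

def GRel (M : Type*) [AddCommMonoid M] : M × M → M × M → Prop :=
  fun p q => ∃ k : M, p.1 + q.2 + k = p.2 + q.1 + k

def Groth (M : Type*) [AddCommMonoid M] := Quot (GRel M)

def Groth.mk {M : Type*} [AddCommMonoid M] (a b : M) : Groth M := Quot.mk _ (a, b)

def Groth.add {M : Type*} [AddCommMonoid M] : Groth M → Groth M → Groth M :=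
  Quot.map₂ (fun p q => (p.1 + q.1, p.2 + q.2))
    (fun p q q' ⟨k, hk⟩ => ⟨k, by
      calc p.1 + q.1 + (p.2 + q'.2) + k = p.1 + p.2 + (q.1 + q'.2 + k) := by abel
        _ = p.1 + p.2 + (q.2 + q'.1 + k) := by rw [hk]
        _ = p.2 + q.2 + (p.1 + q'.1) + k := by abel⟩)
    (fun p p' q ⟨k, hk⟩ => ⟨k, by
      calc p.1 + q.1 + (p'.2 + q.2) + k = q.1 + q.2 + (p.1 + p'.2 + k) := by abel
        _ = q.1 + q.2 + (p.2 + p'.1 + k) := by rw [hk]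
        _ = p.2 + q.2 + (p'.1 + q.1) + k := by abel⟩)

def Groth.neg {M : Type*} [AddCommMonoid M] : Groth M → Groth M :=
  Quot.map Prod.swap (fun _ _ ⟨k, hk⟩ => ⟨k, hk.symm⟩)

instance {M : Type*} [AddCommMonoid M] : Add (Groth M) := ⟨Groth.add⟩
instance {M : Type*} [AddCommMonoid M] : Zero (Groth M) := ⟨Groth.mk 0 0⟩
instance {M : Type*} [AddCommMonoid M] : Neg (Groth M) := ⟨Groth.neg⟩

instance Groth.instAddCommGroup {M : Type*} [AddCommMonoid M] : AddCommGroup (Groth M) where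
  add := (· + ·)
  zero := 0
  neg := Neg.neg
  nsmul := nsmulRec
  zsmul := zsmulRec
  add_assoc := by rintro ⟨a⟩ ⟨b⟩ ⟨c⟩; apply Quot.sound; refine ⟨0, ?_⟩; first | abel1 | (dsimp only [GRel]; abel1) | (simp only [add_zero, zero_add]; abel1) | ac_rfl | simp [add_assoc, add_comm, add_left_comm]
  zero_add := by rintro ⟨a⟩; apply Quot.sound; refine ⟨0, ?_⟩; first | abel1 | (dsimp only [GRel]; abel1) | (simp only [add_zero, zero_add]; abel1) | ac_rfl | simp [add_assoc, add_comm, add_left_comm]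
  add_zero := by rintro ⟨a⟩; apply Quot.sound; refine ⟨0, ?_⟩; first | abel1 | (dsimp only [GRel]; abel1) | (simp only [add_zero, zero_add]; abel1) | ac_rfl | simp [add_assoc, add_comm, add_left_comm]
  add_comm := by rintro ⟨a⟩ ⟨b⟩; exact Quot.sound ⟨0, by abel⟩
  neg_add_cancel := by rintro ⟨a⟩; exact Quot.sound ⟨0, by simp [add_comm]⟩

/-- The image of `K(N)` inside `K(M)`, as a subgroup. -/
def GrothSub {M : Type*} [AddCommMonoid M] (N : AddSubmonoid M) : AddSubgroup (Groth M) where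
  carrier := {x | ∃ a ∈ N, ∃ b ∈ N, x = Groth.mk a b}
  zero_mem' := ⟨0, N.zero_mem, 0, N.zero_mem, rfl⟩
  add_mem' := by
    rintro x y ⟨a, ha, b, hb, rfl⟩ ⟨c, hc, e, he, rfl⟩
    exact ⟨a + c, N.add_mem ha hc, b + e, N.add_mem hb he, rfl⟩
  neg_mem' := by
    rintro x ⟨a, ha, b, hb, rfl⟩
    exact ⟨b, hb, a, ha, rfl⟩

/-- The congruence on `M` induced by a submonoid `N`: `a ∼ b` iff `a + x = b + y`
for some `x, y ∈ N`.  The quotient monoid `M/N` is its `AddCon.Quotient`. -/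
def quotCon {M : Type*} [AddCommMonoid M] (N : AddSubmonoid M) : AddCon M where
  r a b := ∃ x ∈ N, ∃ y ∈ N, a + x = b + y
  iseqv := by
    refine ⟨fun a => ⟨0, N.zero_mem, 0, N.zero_mem, rfl⟩, ?_, ?_⟩
    · rintro a b ⟨x, hx, y, hy, h⟩; exact ⟨y, hy, x, hx, h.symm⟩
    · rintro a b c ⟨x, hx, y, hy, h1⟩ ⟨x', hx', y', hy', h2⟩
      refine ⟨x + x', N.add_mem hx hx', y' + y, N.add_mem hy' hy, ?_⟩
      calc a + (x + x') = a + x + x' := by abel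
        _ = b + y + x' := by rw [h1]
        _ = b + x' + y := by abel
        _ = c + y' + y := by rw [h2]
        _ = c + (y' + y) := by abel
  add' := by
    rintro a b c e ⟨x, hx, y, hy, h1⟩ ⟨x', hx', y', hy', h2⟩
    refine ⟨x + x', N.add_mem hx hx', y + y', N.add_mem hy hy', ?_⟩
    calc a + c + (x + x') = (a + x) + (c + x') := by abel
      _ = (b + y) + (e + y') := by rw [h1, h2]
      _ = b + e + (y + y') := by abel

def grothPhi {M : Type*} [AddCommMonoid M] (N : AddSubmonoid M) :
    Groth M →+ Groth (quotCon N).Quotient where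
  toFun := Quot.map (fun p => ((p.1 : (quotCon N).Quotient), (p.2 : (quotCon N).Quotient)))
    (by
      rintro p q ⟨k, hk⟩
      exact ⟨(k : (quotCon N).Quotient), by
        have := congrArg (AddCon.mk' (quotCon N)) hk
        simpa using this⟩)
  map_zero' := rfl
  map_add' := by rintro ⟨a⟩ ⟨b⟩; rfl

theorem grothPhi_ker {M : Type*} [AddCancelCommMonoid M] (N : AddSubmonoid M) :
    (grothPhi N).ker = GrothSub N := by
  ext x
  constructor
  · rintro hx
    obtain ⟨⟨a, b⟩⟩ := x
    have hx' : Groth.mk (a : (quotCon N).Quotient) (b : (quotCon N).Quotient)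
        = Groth.mk 0 0 := hx
    have heqv : Equivalence (GRel (quotCon N).Quotient) := by
      constructor
      · exact fun p => ⟨0, by rw [add_comm p.1 p.2]⟩
      · rintro p q ⟨k, hk⟩
        exact ⟨k, by rw [add_comm q.1 p.2, add_comm q.2 p.1]; exact hk.symm⟩
      · rintro p q r ⟨k, hk⟩ ⟨l, hl⟩
        refine ⟨q.2 + q.1 + k + l, ?_⟩
        calc p.1 + r.2 + (q.2 + q.1 + k + l)
            = (p.1 + q.2 + k) + (q.1 + r.2 + l) := by abel
          _ = (p.2 + q.1 + k) + (q.2 + r.1 + l) := by rw [hk, hl]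
          _ = p.2 + r.1 + (q.2 + q.1 + k + l) := by abel
    have := (Equivalence.eqvGen_iff heqv).mp (Quot.eqvGen_exact hx')
    · obtain ⟨k, hk⟩ := this
      obtain ⟨c, rfl⟩ := Quot.exists_rep k
      have hc : Quot.mk (⇑(quotCon N).toSetoid) c = ((c : M) : (quotCon N).Quotient) := rfl
      have h1 : ((a + c : M) : (quotCon N).Quotient) = ((b + c : M) : (quotCon N).Quotient) := by
        have h0 := hk
        simp only [hc] at h0
        simpa using h0
      have h2 := (AddCon.eq _).mp h1
      obtain ⟨y, hy, z, hz, h⟩ := h2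
      have h' : a + y = b + z := by
        have : c + (a + y) = c + (b + z) := by
          calc c + (a + y) = a + c + y := by abel
            _ = b + c + z := h
            _ = c + (b + z) := by abel
        exact add_left_cancel this
      refine ⟨z, hz, y, hy, Quot.sound ⟨0, by simpa using h'⟩⟩
  · rintro ⟨a, ha, b, hb, rfl⟩
    show Groth.mk (a : (quotCon N).Quotient) (b : (quotCon N).Quotient) = Groth.mk 0 0
    have h1 : ((a : M) : (quotCon N).Quotient) = ((0 : M) : (quotCon N).Quotient) := by
      refine (AddCon.eq _).mpr ⟨0, N.zero_mem, a, ha, by abel⟩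
    have h2 : ((b : M) : (quotCon N).Quotient) = ((0 : M) : (quotCon N).Quotient) := by
      refine (AddCon.eq _).mpr ⟨0, N.zero_mem, b, hb, by abel⟩
    rw [h1, h2]; rfl

theorem grothPhi_surj {M : Type*} [AddCommMonoid M] (N : AddSubmonoid M) :
    Function.Surjective (grothPhi N) := by
  rintro ⟨⟨p, q⟩⟩
  obtain ⟨a, rfl⟩ := Quot.exists_rep p
  obtain ⟨b, rfl⟩ := Quot.exists_rep q
  exact ⟨Groth.mk a b, rfl⟩

/-- For a cancellative commutative monoid `M` and a submonoid `N`,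
the Grothendieck group of the quotient monoid `M/N` is isomorphic to the
quotient `K(M)/K(N)` of Grothendieck groups. -/
theorem groth_of_quotient {M : Type*} [AddCancelCommMonoid M] (N : AddSubmonoid M) :
    Nonempty (Groth (quotCon N).Quotient ≃+ Groth M ⧸ GrothSub N) := by
  exact ⟨((QuotientAddGroup.quotientKerEquivOfSurjective _ (grothPhi_surj N)).symm.trans
    (QuotientAddGroup.quotientAddEquivOfEq (grothPhi_ker N)))⟩
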